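/- A sequence (𝒟_m)_{m∈ℕ} of gradient discretisations is limit-conforming if and only if it is coercive and there exists a subset 𝐖̃ of 𝐖_D, dense in 𝐖_D for the norm ‖·‖_{𝐖_D}, such that W_{𝒟_m}(ψ) → 0 as m → ∞ for every ψ ∈ 𝐖̃. -/

import Mathlib

open NormedSpace Filter Topology

noncomputable section

variable {L Lv : Type*} [NormedAddCommGroup L] [NormedSpace ℝ L]
  [NormedAddCommGroup Lv] [NormedSpace ℝ Lv]

/-- The seminorm `|u|_{L,V} = sup_{μ ∈ V \ {0}} |⟨μ,u⟩| / ‖μ‖` (equal to `0` when `V = {0}`,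
since `sSup ∅ = 0` in `ℝ`). -/
noncomputable def semV (V : Submodule ℝ (StrongDual ℝ L)) (u : L) : ℝ :=
  sSup ((fun μ : StrongDual ℝ L => |μ u| / ‖μ‖) '' {μ : StrongDual ℝ L | μ ∈ V ∧ μ ≠ 0})

/-- `IsWDpair W_G G φ w` says that `φ ∈ 𝐖_D` with `D φ = w`, i.e. the abstract Stokes formula
`⟨φ, G u⟩ + ⟨w, u⟩ = 0` holds for all `u ∈ W_G`. -/
def IsWDpair (WG : Submodule ℝ L) (G : ↥WG →ₗ[ℝ] Lv) (φ : StrongDual ℝ Lv) (w : StrongDual ℝ L) : Prop :=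
  ∀ u : ↥WG, φ (G u) + w (u : L) = 0

/-- A gradient discretisation `𝒟 = (X_𝒟, P_𝒟, G_𝒟)`: a finite-dimensional real vector space
`X`, a function reconstruction `P : X → L` and a gradient reconstruction `Gd : X → Lv`, such
that `v ↦ (|P v|_{L,V}^p + ‖Gd v‖^p)^{1/p}` is a norm on `X` (definiteness is the only
non-automatic condition). -/
structure GradDisc (L Lv : Type*) [NormedAddCommGroup L] [NormedSpace ℝ L]
    [NormedAddCommGroup Lv] [NormedSpace ℝ Lv]
    (V : Submodule ℝ (StrongDual ℝ L)) (p : ℝ) where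
  X : Type
  [instAddCommGroup : AddCommGroup X]
  [instModule : Module ℝ X]
  [instFin : FiniteDimensional ℝ X]
  P : X →ₗ[ℝ] L
  Gd : X →ₗ[ℝ] Lv
  dnorm_definite : ∀ v : X, (semV V (P v) ^ p + ‖Gd v‖ ^ p) ^ (1 / p) = 0 → v = 0

attribute [instance] GradDisc.instAddCommGroup GradDisc.instModule GradDisc.instFin

namespace GradDisc

variable {V : Submodule ℝ (StrongDual ℝ L)} {p : ℝ}

/-- The discrete norm `‖v‖_𝒟 = (|P_𝒟 v|_{L,V}^p + ‖G_𝒟 v‖_Lv^p)^{1/p}`. -/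
noncomputable def dnorm (D : GradDisc L Lv V p) (v : D.X) : ℝ :=
  (semV V (D.P v) ^ p + ‖D.Gd v‖ ^ p) ^ (1 / p)

/-- `C_𝒟 = max_{v ≠ 0} ‖P_𝒟 v‖_L / ‖v‖_𝒟`. -/
noncomputable def CD (D : GradDisc L Lv V p) : ℝ :=
  sSup ((fun v : D.X => ‖D.P v‖ / D.dnorm v) '' {v : D.X | v ≠ 0})

/-- `W_𝒟(φ) = sup_{u ≠ 0} |⟨φ, G_𝒟 u⟩ + ⟨D φ, P_𝒟 u⟩| / ‖u‖_𝒟`, where `w = D φ`. -/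
noncomputable def WDdef (D : GradDisc L Lv V p) (φ : StrongDual ℝ Lv) (w : StrongDual ℝ L) : ℝ :=
  sSup ((fun u : D.X => |φ (D.Gd u) + w (D.P u)| / D.dnorm u) '' {u : D.X | u ≠ 0})

/-- `S_𝒟(φ) = min_v (‖P_𝒟 v − φ‖_L + ‖G_𝒟 v − G φ‖_Lv)`, where `gφ = G φ`. -/
noncomputable def SDdef (D : GradDisc L Lv V p) (φ : L) (gφ : Lv) : ℝ :=
  sInf (Set.range fun v : D.X => ‖D.P v - φ‖ + ‖D.Gd v - gφ‖)

end GradDisc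

/-- Coercivity of a sequence of gradient discretisations: `sup_m C_{𝒟_m} < ∞`. -/
def Coercive {V : Submodule ℝ (StrongDual ℝ L)} {p : ℝ} (D : ℕ → GradDisc L Lv V p) : Prop :=
  ∃ C : ℝ, ∀ m : ℕ, (D m).CD ≤ C

/-- Limit-conformity: `W_{𝒟_m}(φ) → 0` for every `φ ∈ 𝐖_D` (with `w = D φ`). -/
def LimitConforming (WG : Submodule ℝ L) (G : ↥WG →ₗ[ℝ] Lv)
    {V : Submodule ℝ (StrongDual ℝ L)} {p : ℝ} (D : ℕ → GradDisc L Lv V p) : Prop :=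
  ∀ (φ : StrongDual ℝ Lv) (w : StrongDual ℝ L), IsWDpair WG G φ w →
    Filter.Tendsto (fun m => (D m).WDdef φ w) Filter.atTop (𝓝 0)

/-- Consistency: `S_{𝒟_m}(φ) → 0` for every `φ ∈ W_G`. -/
def Consistent (WG : Submodule ℝ L) (G : ↥WG →ₗ[ℝ] Lv)
    {V : Submodule ℝ (StrongDual ℝ L)} {p : ℝ} (D : ℕ → GradDisc L Lv V p) : Prop :=
  ∀ u : ↥WG, Filter.Tendsto (fun m => (D m).SDdef (u : L) (G u)) Filter.atTop (𝓝 0)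

/-- Compactness: bounded discrete sequences have relatively compact reconstructions in `L`. -/
def CompactSeq {V : Submodule ℝ (StrongDual ℝ L)} {p : ℝ} (D : ℕ → GradDisc L Lv V p) : Prop :=
  ∀ u : (m : ℕ) → (D m).X, (∃ C : ℝ, ∀ m : ℕ, (D m).dnorm (u m) ≤ C) →
    IsCompact (closure (Set.range fun m => (D m).P (u m)))



open NormedSpace Filter Topology

noncomputable section

namespace GDMaux

theorem rpow_self_inv {x : ℝ} (hx : 0 ≤ x) {p : ℝ} (hp : p ≠ 0) : (x ^ p) ^ (1/p) = x := by
  rw [one_div, Real.rpow_rpow_inv hx hp]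

theorem pnorm_le_add {p : ℝ} (hp : 1 ≤ p) {a b : ℝ} (ha : 0 ≤ a) (hb : 0 ≤ b) :
    (a ^ p + b ^ p) ^ (1/p) ≤ a + b := by
  have h := NNReal.rpow_add_rpow_le_add a.toNNReal b.toNNReal hp
  have h2 := NNReal.coe_le_coe.2 h
  push_cast at h2
  rwa [Real.coe_toNNReal a ha, Real.coe_toNNReal b hb] at h2

theorem left_le_pnorm {p : ℝ} (hp : 1 ≤ p) {a b : ℝ} (ha : 0 ≤ a) (hb : 0 ≤ b) :
    a ≤ (a ^ p + b ^ p) ^ (1/p) := by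
  have hp0 : (0:ℝ) < p := lt_of_lt_of_le one_pos hp
  calc a = (a ^ p) ^ (1/p) := (rpow_self_inv ha hp0.ne').symm
    _ ≤ (a ^ p + b ^ p) ^ (1/p) :=
      Real.rpow_le_rpow (Real.rpow_nonneg ha p)
        (le_add_of_nonneg_right (Real.rpow_nonneg hb p)) (by positivity)

theorem right_le_pnorm {p : ℝ} (hp : 1 ≤ p) {a b : ℝ} (ha : 0 ≤ a) (hb : 0 ≤ b) :
    b ≤ (a ^ p + b ^ p) ^ (1/p) := by
  rw [add_comm]; exact left_le_pnorm hp hb ha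

theorem pnorm_mono {p : ℝ} (hp : 0 < p) {a b a' b' : ℝ} (ha : 0 ≤ a) (hb : 0 ≤ b)
    (haa : a ≤ a') (hbb : b ≤ b') :
    (a ^ p + b ^ p) ^ (1/p) ≤ (a' ^ p + b' ^ p) ^ (1/p) :=
  Real.rpow_le_rpow (by positivity)
    (add_le_add (Real.rpow_le_rpow ha haa hp.le) (Real.rpow_le_rpow hb hbb hp.le))
    (by positivity)

theorem pnorm_smul {p : ℝ} (hp : 0 < p) {c a b : ℝ} (hc : 0 ≤ c) (ha : 0 ≤ a) (hb : 0 ≤ b) :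
    ((c*a) ^ p + (c*b) ^ p) ^ (1/p) = c * (a ^ p + b ^ p) ^ (1/p) := by
  rw [Real.mul_rpow hc ha, Real.mul_rpow hc hb, ← mul_add,
    Real.mul_rpow (by positivity) (by positivity), rpow_self_inv hc hp.ne']

theorem pnorm_add_le {p : ℝ} (hp : 1 ≤ p) {a b c d : ℝ} (ha : 0 ≤ a) (hb : 0 ≤ b)
    (hc : 0 ≤ c) (hd : 0 ≤ d) :
    ((a+c) ^ p + (b+d) ^ p) ^ (1/p) ≤ (a ^ p + b ^ p) ^ (1/p) + (c ^ p + d ^ p) ^ (1/p) := by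
  have h := NNReal.Lp_add_le (Finset.univ : Finset (Fin 2))
    ![a.toNNReal, b.toNNReal] ![c.toNNReal, d.toNNReal] hp
  have h2 := NNReal.coe_le_coe.2 h
  rw [Fin.sum_univ_two, Fin.sum_univ_two, Fin.sum_univ_two] at h2
  simp only [Matrix.cons_val_zero, Matrix.cons_val_one, Matrix.head_cons, Pi.add_apply] at h2
  push_cast at h2
  rwa [Real.coe_toNNReal a ha, Real.coe_toNNReal b hb, Real.coe_toNNReal c hc,
    Real.coe_toNNReal d hd] at h2

end GDMaux

section SemVLemmas

open GDMaux

variable {L Lv : Type*} [NormedAddCommGroup L] [NormedSpace ℝ L]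
  [NormedAddCommGroup Lv] [NormedSpace ℝ Lv]
variable {V : Submodule ℝ (StrongDual ℝ L)}

theorem semV_nonneg (V : Submodule ℝ (StrongDual ℝ L)) (u : L) : 0 ≤ semV V u := by
  refine Real.sSup_nonneg ?_
  rintro x ⟨μ, -, rfl⟩
  positivity

theorem semV_elt_le_norm {u : L} {μ : StrongDual ℝ L} (hμ0 : μ ≠ 0) : |μ u| / ‖μ‖ ≤ ‖u‖ := by
  rw [div_le_iff₀ (norm_pos_iff.2 hμ0)]
  calc |μ u| = ‖μ u‖ := rfl
    _ ≤ ‖μ‖ * ‖u‖ := μ.le_opNorm u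
    _ = ‖u‖ * ‖μ‖ := mul_comm _ _

theorem semV_bddAbove (V : Submodule ℝ (StrongDual ℝ L)) (u : L) :
    BddAbove ((fun μ : StrongDual ℝ L => |μ u| / ‖μ‖) '' {μ : StrongDual ℝ L | μ ∈ V ∧ μ ≠ 0}) := by
  refine ⟨‖u‖, ?_⟩
  rintro x ⟨μ, ⟨-, hμ0⟩, rfl⟩
  exact semV_elt_le_norm hμ0

theorem semV_le_norm (V : Submodule ℝ (StrongDual ℝ L)) (u : L) : semV V u ≤ ‖u‖ := by
  refine Real.sSup_le ?_ (norm_nonneg u)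
  rintro x ⟨μ, ⟨-, hμ0⟩, rfl⟩
  exact semV_elt_le_norm hμ0

theorem semV_elt_le (u : L) {μ : StrongDual ℝ L} (hμ : μ ∈ V) (hμ0 : μ ≠ 0) :
    |μ u| / ‖μ‖ ≤ semV V u :=
  le_csSup (semV_bddAbove V u) ⟨μ, ⟨hμ, hμ0⟩, rfl⟩

theorem semV_zero : semV V (0 : L) = 0 := by
  refine le_antisymm (Real.sSup_le ?_ le_rfl) (semV_nonneg V 0)
  rintro x ⟨μ, -, rfl⟩
  simp

theorem semV_add (x y : L) : semV V (x + y) ≤ semV V x + semV V y := by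
  refine Real.sSup_le ?_ (add_nonneg (semV_nonneg V x) (semV_nonneg V y))
  rintro r ⟨μ, ⟨hμ, hμ0⟩, rfl⟩
  calc |μ (x + y)| / ‖μ‖ = |μ x + μ y| / ‖μ‖ := by rw [map_add]
    _ ≤ (|μ x| + |μ y|) / ‖μ‖ := by
        gcongr
        exact abs_add_le _ _
    _ = |μ x| / ‖μ‖ + |μ y| / ‖μ‖ := add_div _ _ _
    _ ≤ semV V x + semV V y := add_le_add (semV_elt_le x hμ hμ0) (semV_elt_le y hμ hμ0)

theorem semV_smul_le (c : ℝ) (x : L) : semV V (c • x) ≤ |c| * semV V x := by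
  refine Real.sSup_le ?_ (mul_nonneg (abs_nonneg c) (semV_nonneg V x))
  rintro r ⟨μ, ⟨hμ, hμ0⟩, rfl⟩
  calc |μ (c • x)| / ‖μ‖ = |c| * (|μ x| / ‖μ‖) := by
        rw [map_smul, smul_eq_mul, abs_mul, mul_div_assoc]
    _ ≤ |c| * semV V x :=
        mul_le_mul_of_nonneg_left (semV_elt_le x hμ hμ0) (abs_nonneg c)

theorem semV_smul (c : ℝ) (x : L) : semV V (c • x) = |c| * semV V x := by
  rcases eq_or_ne c 0 with rfl | hc
  · simp [semV_zero]
  · refine le_antisymm (semV_smul_le c x) ?_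
    have h := semV_smul_le (V := V) c⁻¹ (c • x)
    rw [inv_smul_smul₀ hc] at h
    calc |c| * semV V x ≤ |c| * (|c⁻¹| * semV V (c • x)) :=
          mul_le_mul_of_nonneg_left h (abs_nonneg c)
      _ = semV V (c • x) := by
          rw [← mul_assoc, abs_inv, mul_inv_cancel₀ (abs_ne_zero.2 hc), one_mul]

end SemVLemmas

namespace GradDisc

open GDMaux

variable {L Lv : Type*} [NormedAddCommGroup L] [NormedSpace ℝ L]
  [NormedAddCommGroup Lv] [NormedSpace ℝ Lv]
variable {V : Submodule ℝ (StrongDual ℝ L)} {p : ℝ}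

variable {D : GradDisc L Lv V p}

theorem dnorm_nonneg (D : GradDisc L Lv V p) (v : D.X) : 0 ≤ D.dnorm v :=
  Real.rpow_nonneg (add_nonneg (Real.rpow_nonneg (semV_nonneg V _) p)
    (Real.rpow_nonneg (norm_nonneg _) p)) _

theorem dnorm_zero (hp : 1 < p) (D : GradDisc L Lv V p) : D.dnorm (0 : D.X) = 0 := by
  have hp0 : p ≠ 0 := (lt_trans one_pos hp).ne'
  simp [dnorm, semV_zero, Real.zero_rpow hp0, Real.zero_rpow (inv_ne_zero hp0), one_div]

theorem dnorm_pos (hv : v ≠ 0) : 0 < D.dnorm v :=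
  lt_of_le_of_ne (D.dnorm_nonneg v) (fun h => hv (D.dnorm_definite v h.symm))

theorem semV_le_dnorm (hp : 1 < p) (v : D.X) : semV V (D.P v) ≤ D.dnorm v :=
  left_le_pnorm hp.le (semV_nonneg V _) (norm_nonneg _)

theorem norm_Gd_le_dnorm (hp : 1 < p) (v : D.X) : ‖D.Gd v‖ ≤ D.dnorm v :=
  right_le_pnorm hp.le (semV_nonneg V _) (norm_nonneg _)

theorem dnorm_add_le (hp : 1 < p) (u v : D.X) :
    D.dnorm (u + v) ≤ D.dnorm u + D.dnorm v := by
  have h1 : D.dnorm (u + v) ≤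
      ((semV V (D.P u) + semV V (D.P v)) ^ p + (‖D.Gd u‖ + ‖D.Gd v‖) ^ p) ^ (1/p) := by
    refine pnorm_mono (lt_trans one_pos hp) (semV_nonneg V _) (norm_nonneg _) ?_ ?_
    · rw [map_add]; exact semV_add _ _
    · rw [map_add]; exact norm_add_le _ _
  exact h1.trans (pnorm_add_le hp.le (semV_nonneg V _) (norm_nonneg _)
    (semV_nonneg V _) (norm_nonneg _))

theorem dnorm_smul (hp : 1 < p) (c : ℝ) (v : D.X) :
    D.dnorm (c • v) = |c| * D.dnorm v := by
  unfold dnorm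
  rw [map_smul, map_smul, semV_smul, norm_smul, Real.norm_eq_abs,
    pnorm_smul (lt_trans one_pos hp) (abs_nonneg c) (semV_nonneg V _) (norm_nonneg _)]

/-- The discrete norm as a `NormedAddCommGroup` structure on `D.X`. -/
@[reducible] def dNGroup (D : GradDisc L Lv V p) (hp : 1 < p) : NormedAddCommGroup D.X :=
  AddGroupNorm.toNormedAddCommGroup
    { toFun := D.dnorm
      map_zero' := D.dnorm_zero hp
      add_le' := D.dnorm_add_le hp
      neg' := fun v => by
        have := D.dnorm_smul hp (-1) v
        simpa using this
      eq_zero_of_map_eq_zero' := D.dnorm_definite }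

theorem exists_lin_bound (hp : 1 < p) {E : Type*} [NormedAddCommGroup E] [NormedSpace ℝ E]
    (f : D.X →ₗ[ℝ] E) : ∃ K : ℝ, ∀ v : D.X, ‖f v‖ ≤ K * D.dnorm v := by
  letI : NormedAddCommGroup D.X := D.dNGroup hp
  have hnorm : ∀ v : D.X, ‖v‖ = D.dnorm v := fun _ => rfl
  letI : NormedSpace ℝ D.X :=
    ⟨fun c x => by rw [hnorm, hnorm, D.dnorm_smul hp]; exact le_of_eq rfl⟩
  let f' := LinearMap.toContinuousLinearMap f
  exact ⟨‖f'‖, fun v => by have := f'.le_opNorm v; rw [hnorm] at this; exact this⟩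

theorem WDdef_nonneg (D : GradDisc L Lv V p) (φ : StrongDual ℝ Lv) (w : StrongDual ℝ L) :
    0 ≤ D.WDdef φ w := by
  refine Real.sSup_nonneg ?_
  rintro x ⟨v, -, rfl⟩
  exact div_nonneg (abs_nonneg _) (D.dnorm_nonneg v)

theorem WDdef_bddAbove (hp : 1 < p) (D : GradDisc L Lv V p) (φ : StrongDual ℝ Lv) (w : StrongDual ℝ L) :
    BddAbove ((fun u : D.X => |φ (D.Gd u) + w (D.P u)| / D.dnorm u) '' {u : D.X | u ≠ 0}) := by
  obtain ⟨K, hK⟩ := exists_lin_bound hp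
    ((φ.toLinearMap.comp D.Gd) + (w.toLinearMap.comp D.P))
  refine ⟨K, ?_⟩
  rintro x ⟨v, hv, rfl⟩
  rw [div_le_iff₀ (dnorm_pos hv)]
  simpa [Real.norm_eq_abs] using hK v

theorem le_WDdef (hp : 1 < p) (D : GradDisc L Lv V p) (φ : StrongDual ℝ Lv) (w : StrongDual ℝ L)
    (v : D.X) : |φ (D.Gd v) + w (D.P v)| ≤ D.WDdef φ w * D.dnorm v := by
  rcases eq_or_ne v 0 with rfl | hv
  · simp [D.dnorm_zero hp]
  · rw [← div_le_iff₀ (dnorm_pos hv)]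
    exact le_csSup (WDdef_bddAbove hp D φ w) ⟨v, hv, rfl⟩

theorem WDdef_le (hp : 1 < p) (D : GradDisc L Lv V p) {φ : StrongDual ℝ Lv} {w : StrongDual ℝ L}
    {a : ℝ} (ha : 0 ≤ a)
    (h : ∀ v : D.X, v ≠ 0 → |φ (D.Gd v) + w (D.P v)| ≤ a * D.dnorm v) :
    D.WDdef φ w ≤ a := by
  refine Real.sSup_le ?_ ha
  rintro x ⟨v, hv, rfl⟩
  rw [div_le_iff₀ (dnorm_pos hv)]
  exact h v hv

theorem CD_nonneg (D : GradDisc L Lv V p) : 0 ≤ D.CD := by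
  refine Real.sSup_nonneg ?_
  rintro x ⟨v, -, rfl⟩
  exact div_nonneg (norm_nonneg _) (D.dnorm_nonneg v)

theorem CD_bddAbove (hp : 1 < p) (D : GradDisc L Lv V p) :
    BddAbove ((fun v : D.X => ‖D.P v‖ / D.dnorm v) '' {v : D.X | v ≠ 0}) := by
  obtain ⟨K, hK⟩ := exists_lin_bound hp D.P
  refine ⟨K, ?_⟩
  rintro x ⟨v, hv, rfl⟩
  rw [div_le_iff₀ (dnorm_pos hv)]
  exact hK v

theorem norm_P_le (hp : 1 < p) (D : GradDisc L Lv V p) (v : D.X) :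
    ‖D.P v‖ ≤ D.CD * D.dnorm v := by
  rcases eq_or_ne v 0 with rfl | hv
  · simp [D.dnorm_zero hp]
  · rw [← div_le_iff₀ (dnorm_pos hv)]
    exact le_csSup (CD_bddAbove hp D) ⟨v, hv, rfl⟩

theorem CD_le (hp : 1 < p) (D : GradDisc L Lv V p) {a : ℝ} (ha : 0 ≤ a)
    (h : ∀ v : D.X, v ≠ 0 → ‖D.P v‖ ≤ a * D.dnorm v) : D.CD ≤ a := by
  refine Real.sSup_le ?_ ha
  rintro x ⟨v, hv, rfl⟩
  rw [div_le_iff₀ (dnorm_pos hv)]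
  exact h v hv

end GradDisc

section KeyLemma

open GDMaux

variable {L Lv : Type*} [NormedAddCommGroup L] [NormedSpace ℝ L]
  [NormedAddCommGroup Lv] [NormedSpace ℝ Lv]

theorem norm_le_of_pairs [CompleteSpace L] [CompleteSpace Lv]
    (WG : Submodule ℝ L) (G : ↥WG →ₗ[ℝ] Lv)
    (hGclosed : IsClosed (Set.range fun u : ↥WG => ((u : L), G u)))
    {p : ℝ} (hp : 1 < p) {V : Submodule ℝ (StrongDual ℝ L)}
    {CWGV : ℝ} (hCWGV : 0 < CWGV)
    (hequiv : ∀ u : ↥WG, (‖(u : L)‖ ^ p + ‖G u‖ ^ p) ^ (1 / p) ≤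
      CWGV * (semV V (u : L) ^ p + ‖G u‖ ^ p) ^ (1 / p))
    (z : L) (zv : Lv) (S : ℝ) (hS : 0 ≤ S)
    (hpair : ∀ (φ : StrongDual ℝ Lv) (w : StrongDual ℝ L), IsWDpair WG G φ w → ‖φ‖ ≤ 1 → ‖w‖ ≤ 1 →
      |φ zv + w z| ≤ S) :
    ‖z‖ ≤ (1 + 3 * CWGV) * (semV V z + ‖zv‖ + S) := by
  classical
  -- the graph of `G` as a closed submodule of `L × Lv`
  set E : Submodule ℝ (L × Lv) := LinearMap.range ((WG.subtype).prod G) with hE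
  have hEset : (E : Set (L × Lv)) = Set.range fun u : ↥WG => ((u : L), G u) := by
    ext x
    constructor
    · rintro ⟨u, rfl⟩; exact ⟨u, rfl⟩
    · rintro ⟨u, rfl⟩; exact ⟨u, rfl⟩
  haveI hEclosed : IsClosed (E : Set (L × Lv)) := by rw [hEset]; exact hGclosed
  -- the quotient and the distance
  set x : L × Lv := (z, zv) with hx
  set d : ℝ := ‖(Submodule.Quotient.mk x : (L × Lv) ⧸ E)‖ with hd
  have hd0 : 0 ≤ d := norm_nonneg _
  -- the quotient map as a continuous linear map
  let mkQc : (L × Lv) →L[ℝ] ((L × Lv) ⧸ E) :=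
    LinearMap.mkContinuous E.mkQ 1 (fun y => by
      simpa using Submodule.Quotient.norm_mk_le E y)
  -- Step 1 : `d ≤ S` via Hahn-Banach
  have hdS : d ≤ S := by
    obtain ⟨g, hg1, hgx⟩ := exists_dual_vector'' ℝ (Submodule.Quotient.mk x : (L × Lv) ⧸ E)
    set Φ : (L × Lv) →L[ℝ] ℝ := g.comp mkQc with hΦ
    have hΦbound : ∀ y : L × Lv, |Φ y| ≤ ‖y‖ := by
      intro y
      calc |Φ y| = ‖g (mkQc y)‖ := rfl
        _ ≤ ‖g‖ * ‖mkQc y‖ := g.le_opNorm _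
        _ ≤ 1 * ‖y‖ := by
            refine mul_le_mul hg1 ?_ (norm_nonneg _) zero_le_one
            exact Submodule.Quotient.norm_mk_le E y
        _ = ‖y‖ := one_mul _
    set φ : StrongDual ℝ Lv := Φ.comp (ContinuousLinearMap.inr ℝ L Lv) with hφ
    set w : StrongDual ℝ L := Φ.comp (ContinuousLinearMap.inl ℝ L Lv) with hw
    have hpairφw : IsWDpair WG G φ w := by
      intro u
      have hmem : ((u : L), G u) ∈ E := ⟨u, rfl⟩
      have : Φ ((u : L), G u) = 0 := by
        have h0 : (Submodule.Quotient.mk ((u : L), G u) : (L × Lv) ⧸ E) = 0 :=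
          (Submodule.Quotient.mk_eq_zero E).2 hmem
        calc Φ ((u : L), G u) = g (Submodule.Quotient.mk ((u : L), G u)) := rfl
          _ = g 0 := by rw [h0]
          _ = 0 := map_zero g
      calc φ (G u) + w (u : L) = Φ (0, G u) + Φ ((u : L), 0) := rfl
        _ = Φ (((u : L), 0) + (0, G u)) := by rw [map_add]; ring
        _ = Φ ((u : L), G u) := by norm_num
        _ = 0 := this
    have hφ1 : ‖φ‖ ≤ 1 := by
      refine ContinuousLinearMap.opNorm_le_bound _ zero_le_one fun y => ?_
      have := hΦbound (0, y)
      simpa [hφ, Prod.norm_def, Real.norm_eq_abs] using this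
    have hw1 : ‖w‖ ≤ 1 := by
      refine ContinuousLinearMap.opNorm_le_bound _ zero_le_one fun y => ?_
      have := hΦbound (y, 0)
      simpa [hw, Prod.norm_def, Real.norm_eq_abs] using this
    have hval : φ zv + w z = d := by
      calc φ zv + w z = Φ (0, zv) + Φ (z, 0) := rfl
        _ = Φ ((z, 0) + (0, zv)) := by rw [map_add]; ring
        _ = Φ (z, zv) := by norm_num
        _ = g (Submodule.Quotient.mk x) := rfl
        _ = d := hgx
    calc d = |φ zv + w z| := by rw [hval, abs_of_nonneg hd0]
      _ ≤ S := hpair φ w hpairφw hφ1 hw1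
  -- Step 2 : approximate `(z, zv)` by an element of the graph
  refine le_of_forall_pos_le_add fun ε' hε' => ?_
  have hden : (0:ℝ) < 1 + 2 * CWGV := by linarith
  set ε : ℝ := ε' / (1 + 2 * CWGV) with hεdef
  have hε : 0 < ε := div_pos hε' hden
  obtain ⟨m, hm, hmnorm⟩ :=
    Submodule.Quotient.norm_mk_lt (Submodule.Quotient.mk x : (L × Lv) ⧸ E) hε
  have hxm : x - m ∈ E := by
    have := (Submodule.Quotient.eq E).1 hm
    simpa using E.neg_mem this
  obtain ⟨u, hu⟩ := hxm
  have hu1 : (u : L) = z - m.1 := by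
    have := congrArg Prod.fst hu
    simpa [hx] using this
  have hu2 : G u = zv - m.2 := by
    have := congrArg Prod.snd hu
    simpa [hx] using this
  have hm1 : ‖z - (u : L)‖ ≤ S + ε := by
    rw [hu1]
    simpa using le_trans (norm_fst_le m) (by linarith : ‖m‖ ≤ S + ε)
  have hm2 : ‖zv - G u‖ ≤ S + ε := by
    rw [hu2]
    simpa using le_trans (norm_snd_le m) (by linarith : ‖m‖ ≤ S + ε)
  have hu_norm : ‖(u : L)‖ ≤ CWGV * (semV V (u : L) + ‖G u‖) := by
    calc ‖(u : L)‖ ≤ (‖(u : L)‖ ^ p + ‖G u‖ ^ p) ^ (1/p) :=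
          left_le_pnorm hp.le (norm_nonneg _) (norm_nonneg _)
      _ ≤ CWGV * (semV V (u : L) ^ p + ‖G u‖ ^ p) ^ (1/p) := hequiv u
      _ ≤ CWGV * (semV V (u : L) + ‖G u‖) :=
          mul_le_mul_of_nonneg_left
            (pnorm_le_add hp.le (semV_nonneg V _) (norm_nonneg _)) hCWGV.le
  have hsem : semV V (u : L) ≤ semV V z + (S + ε) := by
    have h1 : (u : L) = z + ((u : L) - z) := by abel
    calc semV V (u : L) = semV V (z + ((u : L) - z)) := by rw [← h1]
      _ ≤ semV V z + semV V ((u : L) - z) := semV_add _ _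
      _ ≤ semV V z + ‖(u : L) - z‖ := by
          have := semV_le_norm V ((u : L) - z); linarith
      _ ≤ semV V z + (S + ε) := by
          rw [← norm_neg]
          simpa [neg_sub] using add_le_add_left hm1 (semV V z)
  have hGu : ‖G u‖ ≤ ‖zv‖ + (S + ε) := by
    calc ‖G u‖ = ‖zv - (zv - G u)‖ := by rw [sub_sub_cancel]
      _ ≤ ‖zv‖ + ‖zv - G u‖ := norm_sub_le _ _
      _ ≤ ‖zv‖ + (S + ε) := by linarith
  have hz : ‖z‖ ≤ (S + ε) + CWGV * ((semV V z + (S + ε)) + (‖zv‖ + (S + ε))) := by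
    calc ‖z‖ = ‖(z - (u : L)) + (u : L)‖ := by rw [sub_add_cancel]
      _ ≤ ‖z - (u : L)‖ + ‖(u : L)‖ := norm_add_le _ _
      _ ≤ (S + ε) + CWGV * (semV V (u : L) + ‖G u‖) := add_le_add hm1 hu_norm
      _ ≤ (S + ε) + CWGV * ((semV V z + (S + ε)) + (‖zv‖ + (S + ε))) := by
          have h : semV V (u : L) + ‖G u‖ ≤ (semV V z + (S + ε)) + (‖zv‖ + (S + ε)) := by
            linarith
          exact add_le_add_right (mul_le_mul_of_nonneg_left h hCWGV.le) _
  have hεeq : ε * (1 + 2 * CWGV) = ε' := by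
    rw [hεdef, div_mul_cancel₀ _ hden.ne']
  have h0s : 0 ≤ semV V z := semV_nonneg V z
  have h0z : (0:ℝ) ≤ ‖zv‖ := norm_nonneg _
  nlinarith [mul_nonneg hCWGV.le h0s, mul_nonneg hCWGV.le h0z, mul_nonneg hCWGV.le hS,
    mul_nonneg hCWGV.le hε.le]

end KeyLemma

open GDMaux GradDisc

theorem limitConforming_iff_coercive_and_dense_subset
    [CompleteSpace L] [CompleteSpace Lv]
    [TopologicalSpace.SeparableSpace L] [TopologicalSpace.SeparableSpace Lv]
    (hreflL : Function.Surjective ⇑(inclusionInDoubleDual ℝ L))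
    (hreflLv : Function.Surjective ⇑(inclusionInDoubleDual ℝ Lv))
    (WG : Submodule ℝ L) (hWGdense : Dense (WG : Set L))
    (G : ↥WG →ₗ[ℝ] Lv)
    (hGclosed : IsClosed (Set.range fun u : ↥WG => ((u : L), G u)))
    (p : ℝ) (hp : 1 < p)
    (p' : ℝ) (hpp' : 1 / p + 1 / p' = 1)
    (V : Submodule ℝ (StrongDual ℝ L)) (hVclosed : IsClosed (V : Set (StrongDual ℝ L)))
    (CWGV : ℝ) (hCWGV : 0 < CWGV)
    (hequiv : ∀ u : ↥WG, (‖(u : L)‖ ^ p + ‖G u‖ ^ p) ^ (1 / p) ≤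
      CWGV * (semV V (u : L) ^ p + ‖G u‖ ^ p) ^ (1 / p))
    (D : ℕ → GradDisc L Lv V p) :
    LimitConforming WG G D ↔
      (Coercive D ∧
        ∃ Wt : Set (StrongDual ℝ Lv × StrongDual ℝ L),
          (∀ q ∈ Wt, IsWDpair WG G q.1 q.2) ∧
          (∀ (φ : StrongDual ℝ Lv) (w : StrongDual ℝ L), IsWDpair WG G φ w → ∀ ε : ℝ, 0 < ε →
            ∃ q ∈ Wt, (‖φ - q.1‖ ^ p' + ‖w - q.2‖ ^ p') ^ (1 / p') < ε) ∧
          (∀ q ∈ Wt, Tendsto (fun m => (D m).WDdef q.1 q.2) atTop (𝓝 0))) := by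
  have hp0 : (0:ℝ) < p := lt_trans one_pos hp
  have h1p : 1/p < 1 := by rw [div_lt_one hp0]; exact hp
  have h1p0 : 0 < 1/p := by positivity
  have h1p'0 : 0 < 1/p' := by linarith
  have hp'0 : 0 < p' := one_div_pos.mp h1p'0
  constructor
  · -- forward direction
    intro hLC
    constructor
    · -- Coercivity
      -- the space `𝐖_D` as a closed submodule of the product of duals
      let WD : Submodule ℝ (StrongDual ℝ Lv × StrongDual ℝ L) :=
        { carrier := {q | IsWDpair WG G q.1 q.2}
          add_mem' := by
            intro a b ha hb u
            have h1 := ha u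
            have h2 := hb u
            simp only [Prod.fst_add, Prod.snd_add, ContinuousLinearMap.add_apply]
            linarith
          zero_mem' := by intro u; simp
          smul_mem' := by
            intro c q hq u
            have h1 := hq u
            simp only [Prod.smul_fst, Prod.smul_snd, ContinuousLinearMap.smul_apply,
              smul_eq_mul]
            rw [← mul_add, h1, mul_zero] }
      have hWDclosed : IsClosed (WD : Set (StrongDual ℝ Lv × StrongDual ℝ L)) := by
        have hset : (WD : Set (StrongDual ℝ Lv × StrongDual ℝ L)) =
            ⋂ u : ↥WG, {q : StrongDual ℝ Lv × StrongDual ℝ L | q.1 (G u) + q.2 (u : L) = 0} := by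
          ext q
          simp only [SetLike.mem_coe, Set.mem_iInter, Set.mem_setOf_eq]
          rfl
        rw [hset]
        refine isClosed_iInter fun u => isClosed_eq ?_ continuous_const
        exact (((ContinuousLinearMap.apply ℝ ℝ (G u)).continuous).comp continuous_fst).add
          (((ContinuousLinearMap.apply ℝ ℝ ((u : L))).continuous).comp continuous_snd)
      haveI : CompleteSpace ↥WD := hWDclosed.completeSpace_coe
      -- the Banach-Steinhaus family
      let glin : (m : ℕ) → (D m).X → (↥WD →ₗ[ℝ] ℝ) := fun m v =>
        { toFun := fun q => (q : StrongDual ℝ Lv × StrongDual ℝ L).1 ((D m).Gd v) +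
            (q : StrongDual ℝ Lv × StrongDual ℝ L).2 ((D m).P v)
          map_add' := by
            intro a b
            simp only [Submodule.coe_add, Prod.fst_add, Prod.snd_add,
              ContinuousLinearMap.add_apply]
            ring
          map_smul' := by
            intro c a
            simp only [Submodule.coe_smul, Prod.smul_fst, Prod.smul_snd,
              ContinuousLinearMap.smul_apply, smul_eq_mul, RingHom.id_apply]
            ring }
      have gbound : ∀ (m : ℕ) (v : (D m).X) (q : ↥WD),
          ‖glin m v q‖ ≤ (‖(D m).Gd v‖ + ‖(D m).P v‖) * ‖q‖ := by
        intro m v q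
        have h1 : ‖(q : StrongDual ℝ Lv × StrongDual ℝ L).1‖ ≤ ‖q‖ := norm_fst_le _
        have h2 : ‖(q : StrongDual ℝ Lv × StrongDual ℝ L).2‖ ≤ ‖q‖ := norm_snd_le _
        calc ‖glin m v q‖ ≤ ‖(q : StrongDual ℝ Lv × StrongDual ℝ L).1 ((D m).Gd v)‖ +
              ‖(q : StrongDual ℝ Lv × StrongDual ℝ L).2 ((D m).P v)‖ := norm_add_le _ _
          _ ≤ ‖(q : StrongDual ℝ Lv × StrongDual ℝ L).1‖ * ‖(D m).Gd v‖ +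
              ‖(q : StrongDual ℝ Lv × StrongDual ℝ L).2‖ * ‖(D m).P v‖ :=
            add_le_add (ContinuousLinearMap.le_opNorm _ _)
              (ContinuousLinearMap.le_opNorm _ _)
          _ ≤ ‖q‖ * ‖(D m).Gd v‖ + ‖q‖ * ‖(D m).P v‖ :=
            add_le_add (mul_le_mul_of_nonneg_right h1 (norm_nonneg _))
              (mul_le_mul_of_nonneg_right h2 (norm_nonneg _))
          _ = (‖(D m).Gd v‖ + ‖(D m).P v‖) * ‖q‖ := by ring
      letI : SeminormedAddCommGroup ↥WD := Submodule.seminormedAddCommGroup WD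
      letI : NormedSpace ℝ ↥WD := Submodule.normedSpace WD
      let g : ((m : ℕ) × {v : (D m).X // (D m).dnorm v ≤ 1}) → (↥WD →L[ℝ] ℝ) := fun i =>
        LinearMap.mkContinuous (glin i.1 i.2.1) (‖(D i.1).Gd i.2.1‖ + ‖(D i.1).P i.2.1‖)
          (fun q => gbound i.1 i.2.1 q)
      have hpt : ∀ q : ↥WD, ∃ C, ∀ i, ‖g i q‖ ≤ C := by
        intro q
        obtain ⟨B, hB⟩ :=
          (hLC (q : StrongDual ℝ Lv × StrongDual ℝ L).1 (q : StrongDual ℝ Lv × StrongDual ℝ L).2 q.2).bddAbove_range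
        refine ⟨B, fun i => ?_⟩
        have hBm : (D i.1).WDdef (q : StrongDual ℝ Lv × StrongDual ℝ L).1
            (q : StrongDual ℝ Lv × StrongDual ℝ L).2 ≤ B := hB ⟨i.1, rfl⟩
        calc ‖g i q‖ = |(q : StrongDual ℝ Lv × StrongDual ℝ L).1 ((D i.1).Gd i.2.1) +
              (q : StrongDual ℝ Lv × StrongDual ℝ L).2 ((D i.1).P i.2.1)| := rfl
          _ ≤ (D i.1).WDdef (q : StrongDual ℝ Lv × StrongDual ℝ L).1 (q : StrongDual ℝ Lv × StrongDual ℝ L).2 *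
              (D i.1).dnorm i.2.1 := le_WDdef hp (D i.1) _ _ i.2.1
          _ ≤ (D i.1).WDdef (q : StrongDual ℝ Lv × StrongDual ℝ L).1 (q : StrongDual ℝ Lv × StrongDual ℝ L).2 * 1 :=
            mul_le_mul_of_nonneg_left i.2.2 (WDdef_nonneg (D i.1) _ _)
          _ ≤ B := by rw [mul_one]; exact hBm
      obtain ⟨C', hC'⟩ := banach_steinhaus (E := ↥WD) (F := ℝ) (𝕜 := ℝ) (𝕜₂ := ℝ) (σ₁₂ := RingHom.id ℝ) (g := g) hpt
      set S : ℝ := max C' 0 with hSdef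
      have hS0 : 0 ≤ S := le_max_right _ _
      refine ⟨(1 + 3 * CWGV) * (1 + 1 + S), fun m => ?_⟩
      refine CD_le hp (D m) (mul_nonneg (by linarith) (by linarith)) ?_
      intro v hv
      have ht : 0 < (D m).dnorm v := dnorm_pos hv
      set v₁ : (D m).X := ((D m).dnorm v)⁻¹ • v with hv₁def
      have hv₁ : (D m).dnorm v₁ = 1 := by
        rw [hv₁def, dnorm_smul hp, abs_of_pos (inv_pos.2 ht), inv_mul_cancel₀ ht.ne']
      have hkey : ‖(D m).P v₁‖ ≤
          (1 + 3 * CWGV) * (semV V ((D m).P v₁) + ‖(D m).Gd v₁‖ + S) := by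
        refine norm_le_of_pairs WG G hGclosed hp hCWGV hequiv _ _ S hS0 ?_
        intro φ w hφw hφ1 hw1
        set q : ↥WD := ⟨(φ, w), hφw⟩ with hqdef
        have hqn : ‖q‖ ≤ 1 := by
          calc ‖q‖ = max ‖φ‖ ‖w‖ := rfl
            _ ≤ 1 := max_le hφ1 hw1
        set i : (m : ℕ) × {v : (D m).X // (D m).dnorm v ≤ 1} := ⟨m, ⟨v₁, hv₁.le⟩⟩ with hidef
        calc |φ ((D m).Gd v₁) + w ((D m).P v₁)| = ‖g i q‖ := rfl
          _ ≤ ‖g i‖ * ‖q‖ := (g i).le_opNorm q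
          _ ≤ C' * ‖q‖ := mul_le_mul_of_nonneg_right (hC' i) (norm_nonneg q)
          _ ≤ S * 1 := mul_le_mul (le_max_left _ _) hqn (norm_nonneg q) hS0
          _ = S := mul_one S
      have hb1 : semV V ((D m).P v₁) ≤ 1 := hv₁ ▸ semV_le_dnorm hp v₁
      have hb2 : ‖(D m).Gd v₁‖ ≤ 1 := hv₁ ▸ norm_Gd_le_dnorm hp v₁
      have h3 : ‖(D m).P v₁‖ ≤ (1 + 3 * CWGV) * (1 + 1 + S) :=
        hkey.trans (mul_le_mul_of_nonneg_left (by linarith) (by linarith))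
      have hvv : (D m).dnorm v • v₁ = v := smul_inv_smul₀ ht.ne' v
      have hPv : ‖(D m).P v‖ = (D m).dnorm v * ‖(D m).P v₁‖ := by
        conv_lhs => rw [← hvv]
        rw [map_smul, norm_smul, Real.norm_eq_abs, abs_of_pos ht]
      rw [hPv, mul_comm ((1 + 3 * CWGV) * (1 + 1 + S)) ((D m).dnorm v)]
      exact mul_le_mul_of_nonneg_left h3 ht.le
    · -- the dense subset : take all of `𝐖_D`
      refine ⟨{q | IsWDpair WG G q.1 q.2}, fun q hq => hq, ?_, fun q hq => hLC q.1 q.2 hq⟩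
      intro φ w h ε hε
      refine ⟨(φ, w), h, ?_⟩
      simpa [sub_self, norm_zero, Real.zero_rpow hp'0.ne', add_zero, one_div,
        Real.zero_rpow (inv_ne_zero hp'0.ne')] using hε
  · -- backward direction
    rintro ⟨⟨C, hC⟩, Wt, hWt1, hWt2, hWt3⟩ φ w hφw
    set C₀ : ℝ := max C 0 with hC₀def
    have hC₀ : ∀ m, (D m).CD ≤ C₀ := fun m => (hC m).trans (le_max_left _ _)
    have hC₀0 : 0 ≤ C₀ := le_max_right _ _
    rw [Metric.tendsto_atTop]
    intro ε hε
    have hden : (0:ℝ) < 1 + C₀ := by linarith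
    set δ : ℝ := ε / (2 * (1 + C₀)) with hδdef
    have hδ : 0 < δ := by positivity
    obtain ⟨q, hqWt, hqclose⟩ := hWt2 φ w hφw δ hδ
    have hbothle : ‖φ - q.1‖ ≤ δ ∧ ‖w - q.2‖ ≤ δ := by
      constructor
      · have e1 : (‖φ - q.1‖ ^ p') ^ (1/p') = ‖φ - q.1‖ :=
          rpow_self_inv (norm_nonneg _) hp'0.ne'
        have e2 : (‖φ - q.1‖ ^ p') ^ (1/p') ≤
            (‖φ - q.1‖ ^ p' + ‖w - q.2‖ ^ p') ^ (1/p') :=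
          Real.rpow_le_rpow (Real.rpow_nonneg (norm_nonneg _) _)
            (le_add_of_nonneg_right (Real.rpow_nonneg (norm_nonneg _) _)) h1p'0.le
        linarith
      · have e1 : (‖w - q.2‖ ^ p') ^ (1/p') = ‖w - q.2‖ :=
          rpow_self_inv (norm_nonneg _) hp'0.ne'
        have e2 : (‖w - q.2‖ ^ p') ^ (1/p') ≤
            (‖φ - q.1‖ ^ p' + ‖w - q.2‖ ^ p') ^ (1/p') :=
          Real.rpow_le_rpow (Real.rpow_nonneg (norm_nonneg _) _)
            (le_add_of_nonneg_left (Real.rpow_nonneg (norm_nonneg _) _)) h1p'0.le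
        linarith
    obtain ⟨hφq, hwq⟩ := hbothle
    obtain ⟨N, hN⟩ := (Metric.tendsto_atTop.1 (hWt3 q hqWt)) (ε/2) (half_pos hε)
    refine ⟨N, fun n hn => ?_⟩
    have h1 : (D n).WDdef q.1 q.2 < ε/2 := by
      have := hN n hn
      rwa [Real.dist_eq, sub_zero, abs_of_nonneg (WDdef_nonneg (D n) _ _)] at this
    have h2 : (D n).WDdef φ w ≤ (D n).WDdef q.1 q.2 + δ * (1 + C₀) := by
      refine WDdef_le hp (D n) (add_nonneg (WDdef_nonneg (D n) _ _) (by positivity)) ?_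
      intro v hv
      have hGd : ‖(D n).Gd v‖ ≤ (D n).dnorm v := norm_Gd_le_dnorm hp v
      have hP : ‖(D n).P v‖ ≤ C₀ * (D n).dnorm v :=
        (norm_P_le hp (D n) v).trans
          (mul_le_mul_of_nonneg_right (hC₀ n) (dnorm_nonneg (D n) v))
      have hd0 : 0 ≤ (D n).dnorm v := dnorm_nonneg (D n) v
      have e1 : |(φ - q.1) ((D n).Gd v)| ≤ δ * (D n).dnorm v := by
        calc |(φ - q.1) ((D n).Gd v)| ≤ ‖φ - q.1‖ * ‖(D n).Gd v‖ :=
            (φ - q.1).le_opNorm _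
          _ ≤ δ * (D n).dnorm v := mul_le_mul hφq hGd (norm_nonneg _) hδ.le
      have e2 : |(w - q.2) ((D n).P v)| ≤ δ * (C₀ * (D n).dnorm v) := by
        calc |(w - q.2) ((D n).P v)| ≤ ‖w - q.2‖ * ‖(D n).P v‖ :=
            (w - q.2).le_opNorm _
          _ ≤ δ * (C₀ * (D n).dnorm v) :=
            mul_le_mul hwq hP (norm_nonneg _) hδ.le
      have e3 : |q.1 ((D n).Gd v) + q.2 ((D n).P v)| ≤
          (D n).WDdef q.1 q.2 * (D n).dnorm v := le_WDdef hp (D n) _ _ v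
      calc |φ ((D n).Gd v) + w ((D n).P v)|
          = |(q.1 ((D n).Gd v) + q.2 ((D n).P v)) +
              ((φ - q.1) ((D n).Gd v) + (w - q.2) ((D n).P v))| := by
            congr 1
            simp only [ContinuousLinearMap.sub_apply]
            ring
        _ ≤ |q.1 ((D n).Gd v) + q.2 ((D n).P v)| +
              |(φ - q.1) ((D n).Gd v) + (w - q.2) ((D n).P v)| := abs_add_le _ _
        _ ≤ |q.1 ((D n).Gd v) + q.2 ((D n).P v)| +
              (|(φ - q.1) ((D n).Gd v)| + |(w - q.2) ((D n).P v)|) := by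
            have := abs_add_le ((φ - q.1) ((D n).Gd v)) ((w - q.2) ((D n).P v))
            linarith
        _ ≤ (D n).WDdef q.1 q.2 * (D n).dnorm v +
              (δ * (D n).dnorm v + δ * (C₀ * (D n).dnorm v)) := by linarith
        _ = ((D n).WDdef q.1 q.2 + δ * (1 + C₀)) * (D n).dnorm v := by ring
    have hδeq : δ * (1 + C₀) = ε / 2 := by
      rw [hδdef]
      field_simp
    rw [Real.dist_eq, sub_zero, abs_of_nonneg (WDdef_nonneg (D n) φ w)]
    calc (D n).WDdef φ w ≤ (D n).WDdef q.1 q.2 + δ * (1 + C₀) := h2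
      _ < ε/2 + ε/2 := by rw [hδeq]; exact add_lt_add_left h1 _
      _ = ε := add_halves ε
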